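/- Let t₁, t₂ be isometries on a Hilbert space with the Cuntz O₂ relations, let p ≥ 2, and let Ω satisfy t₂^{p−1}t₁Ω = Ω. Let (a_n) be the recursive fermion system a₁ = t₁t₂*, a_n = ζ(a_{n−1}). Then for every l ≥ 1: a_{pl}* Ω = (−1)^{(p−1)l} (t₂^{p−1}t₁)^{l−1} t₂^{p} Ω, and a_{p(l−1)+i}* Ω = 0 for every i with 1 ≤ i ≤ p−1. -/

import Mathlib

open ContinuousLinearMap

/-- Action of the fermion creation operators of the recursive fermion system on
the GP vector `Ω` of the permutative representation `P₂(2^{p-1}1)`: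
`a_{pl}* Ω = (-1)^{(p-1)l} (t₂^{p-1}t₁)^{l-1} t₂^p Ω` and
`a_{p(l-1)+i}* Ω = 0` for `1 ≤ i ≤ p-1`. -/
theorem RFS_creation_on_GP_vector
    {H : Type*} [NormedAddCommGroup H] [InnerProductSpace ℂ H] [CompleteSpace H]
    (t₁ t₂ : H →L[ℂ] H)
    (h11 : adjoint t₁ * t₁ = 1) (h22 : adjoint t₂ * t₂ = 1)
    (h12 : adjoint t₁ * t₂ = 0) (h21 : adjoint t₂ * t₁ = 0)
    (hsum : t₁ * adjoint t₁ + t₂ * adjoint t₂ = 1)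
    (p : ℕ) (hp : 2 ≤ p)
    (Ω : H) (hfix : (t₂ ^ (p - 1) * t₁) Ω = Ω)
    (a : ℕ → H →L[ℂ] H)
    (ha1 : a 1 = t₁ * adjoint t₂)
    (harec : ∀ n : ℕ, 1 ≤ n →
      a (n + 1) = t₁ * a n * adjoint t₁ - t₂ * a n * adjoint t₂) :
    ∀ l : ℕ, 1 ≤ l →
      (adjoint (a (p * l)) Ω =
        ((-1 : ℂ) ^ ((p - 1) * l)) • (((t₂ ^ (p - 1) * t₁) ^ (l - 1)) * t₂ ^ p) Ω) ∧
      (∀ i : ℕ, 1 ≤ i → i ≤ p - 1 → adjoint (a (p * (l - 1) + i)) Ω = 0) := by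
  -- pointwise versions of the Cuntz relations
  have e11 : ∀ x : H, adjoint t₁ (t₁ x) = x := fun x => by
    have := DFunLike.congr_fun h11 x; simpa [mul_apply] using this
  have e22 : ∀ x : H, adjoint t₂ (t₂ x) = x := fun x => by
    have := DFunLike.congr_fun h22 x; simpa [mul_apply] using this
  have e12 : ∀ x : H, adjoint t₁ (t₂ x) = 0 := fun x => by
    have := DFunLike.congr_fun h12 x; simpa [mul_apply] using this
  have e21 : ∀ x : H, adjoint t₂ (t₁ x) = 0 := fun x => by
    have := DFunLike.congr_fun h21 x; simpa [mul_apply] using this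
  -- the creation operators b n := adjoint (a n)
  have hb1 : adjoint (a 1) = t₂ * adjoint t₁ := by
    rw [ha1, ← star_eq_adjoint, ← star_eq_adjoint, star_mul, star_star, star_eq_adjoint]
  have hbrec : ∀ n, 1 ≤ n → adjoint (a (n + 1))
      = t₁ * adjoint (a n) * adjoint t₁ - t₂ * adjoint (a n) * adjoint t₂ := by
    intro n hn
    rw [harec n hn]
    simp only [← star_eq_adjoint, star_sub, star_mul, star_star, mul_assoc]
  -- the tower of vectors
  set ω : ℕ → H := fun k => (t₂ ^ k * t₁) Ω with hωdef
  have hΩω : ω (p - 1) = Ω := hfix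
  have hω0 : ω 0 = t₁ Ω := by simp [hωdef]
  have hωsucc : ∀ k, ω (k + 1) = t₂ (ω k) := by
    intro k; simp [hωdef, pow_succ', mul_apply]; rw [← Function.iterate_succ_apply, Function.iterate_succ_apply']
  -- one-step relations
  have step1 : ∀ n, 1 ≤ n → ∀ k,
      adjoint (a (n + 1)) (ω (k + 1)) = - t₂ (adjoint (a n) (ω k)) := by
    intro n hn k
    rw [hbrec n hn, hωsucc k]
    simp [sub_apply, mul_apply, e12, e22]
  have step0 : ∀ n, 1 ≤ n → adjoint (a (n + 1)) (ω 0) = t₁ (adjoint (a n) Ω) := by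
    intro n hn
    rw [hbrec n hn, hω0]
    simp [sub_apply, mul_apply, e11, e21]
  -- chain lemma
  have chain : ∀ m, m ≤ p - 1 → ∀ n, 1 ≤ n →
      adjoint (a (n + m)) Ω
        = ((-1 : ℂ) ^ m) • (t₂ ^ m) (adjoint (a n) (ω (p - 1 - m))) := by
    intro m
    induction m with
    | zero => intro _ n hn; simp [hΩω]
    | succ m ih =>
      intro hm n hn
      have hm' : m ≤ p - 1 := by omega
      have h1 : n + (m + 1) = (n + 1) + m := by omega
      rw [h1, ih hm' (n + 1) (by omega)]
      have h2 : p - 1 - m = (p - 1 - (m + 1)) + 1 := by omega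
      rw [h2, step1 n hn]
      simp [pow_succ, mul_apply, smul_smul, mul_comm]
  -- (A) vanishing for 1 ≤ i ≤ p-1
  have hA : ∀ i, 1 ≤ i → i ≤ p - 1 → adjoint (a i) Ω = 0 := by
    intro i hi1 hi2
    have h1 : i = 1 + (i - 1) := by omega
    rw [h1, chain (i - 1) (by omega) 1 le_rfl]
    have h2 : p - 1 - (i - 1) = (p - 1 - i) + 1 := by omega
    rw [h2, hb1, hωsucc]
    simp [mul_apply, e12]
  -- (B) value at p
  have hB : adjoint (a p) Ω = ((-1 : ℂ) ^ (p - 1)) • (t₂ ^ p) Ω := by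
    have h1 := chain (p - 1) le_rfl 1 le_rfl
    rw [show 1 + (p - 1) = p by omega, Nat.sub_self] at h1
    rw [h1, hb1, hω0]
    have hp2 : (t₂ ^ p) Ω = (t₂ ^ (p - 1)) (t₂ Ω) := by
      conv_lhs => rw [show p = (p - 1) + 1 by omega]
      rw [pow_succ, ContinuousLinearMap.mul_apply]
    rw [hp2]
    simp [mul_apply, e11]
  -- (C) period-p recursion
  have hC : ∀ n, 1 ≤ n → adjoint (a (n + p)) Ω
      = ((-1 : ℂ) ^ (p - 1)) • ((t₂ ^ (p - 1)) * t₁) (adjoint (a n) Ω) := by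
    intro n hn
    have h1 := chain (p - 1) le_rfl (n + 1) (by omega)
    rw [show n + 1 + (p - 1) = n + p by omega, Nat.sub_self] at h1
    rw [h1, step0 n hn, ContinuousLinearMap.mul_apply]
  -- main induction on l
  intro l hl
  induction l with
  | zero => omega
  | succ l ih =>
    by_cases hl0 : l = 0
    · subst hl0
      constructor
      · simpa using hB
      · intro i hi1 hi2
        simpa using hA i hi1 hi2
    · have hl1 : 1 ≤ l := by omega
      obtain ⟨ih1, ih2⟩ := ih hl1
      constructor
      · have h1 : p * (l + 1) = p * l + p := by ring
        rw [h1, hC (p * l) (Nat.mul_pos (by omega) hl1), ih1, map_smul, smul_smul]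
        have hXl : (t₂ ^ (p - 1) * t₁) ^ ((l + 1) - 1)
            = (t₂ ^ (p - 1) * t₁) * (t₂ ^ (p - 1) * t₁) ^ (l - 1) := by
          conv_lhs => rw [show (l + 1) - 1 = (l - 1) + 1 by omega]
          rw [pow_succ']
        rw [hXl]
        have hsgn : ((-1 : ℂ) ^ (p - 1)) * ((-1 : ℂ) ^ ((p - 1) * l))
            = (-1 : ℂ) ^ ((p - 1) * (l + 1)) := by
          rw [← pow_add]; congr 1; ring
        rw [hsgn]
        simp [mul_apply]
      · intro i hi1 hi2
        have h1 : p * ((l + 1) - 1) + i = (p * (l - 1) + i) + p := by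
          have h2 : p * l = p * (l - 1) + p := by
            conv_lhs => rw [show l = (l - 1) + 1 by omega]
            ring
          have h3 : l + 1 - 1 = l := rfl
          rw [h3]
          omega
        rw [h1, hC _ (by omega), ih2 i hi1 hi2]
        simp
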